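/- For 3 ≤ r ≤ ⌈(n+1)/2⌉ and r ≤ m ≤ n−r+2, the number of α ∈ RD*_n with |im(α)| = r and order-reversing degree exactly m equals C(m−1, r−1)·C(n−m+1, r−1). -/

import Mathlib

open Finset

namespace ORDPaper

/-- `f` is a full transformation of the chain `{1,…,n}`, acting as the identity outside. -/
def IsTrans (n : ℕ) (f : ℕ → ℕ) : Prop :=
  (∀ x, 1 ≤ x → x ≤ n → 1 ≤ f x ∧ f x ≤ n) ∧ ∀ x, ¬(1 ≤ x ∧ x ≤ n) → f x = x

/-- Composition of transformations, written left to right: `x(αβ) = (xα)β`. -/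
def comp (f g : ℕ → ℕ) : ℕ → ℕ := fun x => g (f x)

/-- The value of `f` at the cyclic successor of `i` (so `(n+1)α = 1α`). -/
def nxt (n : ℕ) (f : ℕ → ℕ) (i : ℕ) : ℕ := if i = n then f 1 else f (i + 1)

/-- `(1α,…,nα)` is cyclic: there is at most one descent (cyclically). -/
def Cyclic (n : ℕ) (f : ℕ → ℕ) : Prop :=
  ((Finset.Icc 1 n).filter (fun i => nxt n f i < f i)).card ≤ 1

/-- `(1α,…,nα)` is anti-cyclic: there is at most one ascent (cyclically). -/
def AntiCyclic (n : ℕ) (f : ℕ → ℕ) : Prop :=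
  ((Finset.Icc 1 n).filter (fun i => f i < nxt n f i)).card ≤ 1

/-- Order-decreasing on `{1,…,n}`. -/
def Decreasing (n : ℕ) (f : ℕ → ℕ) : Prop := ∀ x, 1 ≤ x → x ≤ n → f x ≤ x

/-- Image of `{1,…,n}` under `f`. -/
def im (n : ℕ) (f : ℕ → ℕ) : Finset ℕ := (Finset.Icc 1 n).image f

/-- Fixed points of `f` in `{1,…,n}`. -/
def fixSet (n : ℕ) (f : ℕ → ℕ) : Finset ℕ := (Finset.Icc 1 n).filter (fun x => f x = x)

/-- The semigroup `D_n` of order-decreasing full transformations. -/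
def Dn (n : ℕ) : Set (ℕ → ℕ) := {f | IsTrans n f ∧ Decreasing n f}

/-- Orientation-preserving order-decreasing transformations. -/
def OPD (n : ℕ) : Set (ℕ → ℕ) := {f | f ∈ Dn n ∧ Cyclic n f}

/-- Oriented order-decreasing transformations. -/
def ORDn (n : ℕ) : Set (ℕ → ℕ) := {f | f ∈ Dn n ∧ (Cyclic n f ∨ AntiCyclic n f)}

/-- `RD*_n`: orientation-reversing, order-decreasing, not orientation-preserving. -/
def RDstar (n : ℕ) : Set (ℕ → ℕ) := {f | f ∈ Dn n ∧ AntiCyclic n f ∧ ¬ Cyclic n f}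

/-- `ORD(n,r)`. -/
def ORDr (n r : ℕ) : Set (ℕ → ℕ) := {f | f ∈ ORDn n ∧ (im n f).card ≤ r}

/-- `OPD(n,r)`. -/
def OPDr (n r : ℕ) : Set (ℕ → ℕ) := {f | f ∈ OPD n ∧ (im n f).card ≤ r}

/-- The order-reversing degree: `min(X_n \ 1α⁻¹)`. -/
noncomputable def ordDeg (n : ℕ) (f : ℕ → ℕ) : ℕ := sInf {x | 1 ≤ x ∧ x ≤ n ∧ f x ≠ 1}

/-- Minimum of the preimage of `x` under `f` inside `{1,…,n}`. -/
noncomputable def preMin (n : ℕ) (f : ℕ → ℕ) (x : ℕ) : ℕ := sInf {y | 1 ≤ y ∧ y ≤ n ∧ f y = x}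

/-- Membership in the subsemigroup generated by `A`. -/
inductive gen (A : Set (ℕ → ℕ)) : (ℕ → ℕ) → Prop
  | base {f} : f ∈ A → gen A f
  | mul {f g} : gen A f → gen A g → gen A (comp f g)

/-- Rank of a transformation semigroup `S`. -/
noncomputable def rank (S : Set (ℕ → ℕ)) : ℕ :=
  sInf {k | ∃ A : Set (ℕ → ℕ), A ⊆ S ∧ A.Finite ∧ A.ncard = k ∧ {f | gen A f} = S}

/-- `r̂ = min{r, ⌈(n+1)/2⌉}`. -/
def rhat (n r : ℕ) : ℕ := min r ((n + 2) / 2)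

/-- `ρ_m` fixes `1,…,m` and sends `m+1,…,n` to `1`. -/
def rho (n m : ℕ) : ℕ → ℕ := fun x =>
  if ¬(1 ≤ x ∧ x ≤ n) then x else if x ≤ m then x else 1

/-- The order-preserving degree `opd(α) = max{m : α|_{X_m} is order-preserving}`. -/
noncomputable def opd (n : ℕ) (f : ℕ → ℕ) : ℕ :=
  sSup {m | m ≤ n ∧ ∀ x y, 1 ≤ x → x ≤ y → y ≤ m → f x ≤ f y}

/-- The set `C = (⋃_{m=r+1}^n B_m) ∪ {ρ_2,…,ρ_r}`. -/
def Cset (n r : ℕ) : Set (ℕ → ℕ) :=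
  {f | (f ∈ OPD n ∧ comp f f = f ∧ (im n f).card = r ∧ r + 1 ≤ opd n f ∧ opd n f ≤ n)
    ∨ (∃ m, 2 ≤ m ∧ m ≤ r ∧ f = rho n m)}

/-- The map `λ_{m,r}`: sends `[1,m-1]` to `1`, maps `x ∈ [m, min(2m-p-2,n)]` to `2m-x`
(where `p = max{0, m-r}` is `m - r` in truncated subtraction), and the rest of `[1,n]` to `1`. -/
def lam (n r m : ℕ) : ℕ → ℕ := fun x =>
  if ¬(1 ≤ x ∧ x ≤ n) then x
  else if x < m then 1
  else if x ≤ min (2 * m - (m - r) - 2) n then 2 * m - x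
  else 1

/-- `G_{n,r} = {λ_{m,r} : 3 ≤ m ≤ n-1}`. -/
def Gset (n r : ℕ) : Set (ℕ → ℕ) := {f | ∃ m, 3 ≤ m ∧ m ≤ n - 1 ∧ f = lam n r m}

/-- `L_{m,r}`. -/
def Lset (n r m : ℕ) : Set (ℕ → ℕ) :=
  {f | f ∈ ORDn n ∧ im n f = im n (lam n r m) ∧
    ∀ x ∈ im n (lam n r m), preMin n f x = preMin n (lam n r m) x}

/-- `α_{m,r}`: the idempotent fixing `{1} ∪ [m, 2m-p-2]` and sending the rest of `[1,n]` to `1`. -/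
def alphaMap (n r m : ℕ) : ℕ → ℕ := fun x =>
  if ¬(1 ≤ x ∧ x ≤ n) then x
  else if x < m then 1
  else if x ≤ 2 * m - (m - r) - 2 then x
  else 1

/-- `β_{m,r}`: sends `[1,m-1]` to `1`, maps `m,…,2m-p-3` order-reversingly to `m,…,p+3`,
and `[2m-p-2, n]` to `p+2`. -/
def betaMap (n r m : ℕ) : ℕ → ℕ := fun x =>
  if ¬(1 ≤ x ∧ x ≤ n) then x
  else if x < m then 1
  else if x ≤ 2 * m - (m - r) - 3 then 2 * m - x
  else (m - r) + 2

/-- `S` is a subsemigroup of `T`. -/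
def IsSubsemigroupOf (S T : Set (ℕ → ℕ)) : Prop :=
  S ⊆ T ∧ ∀ f ∈ S, ∀ g ∈ S, comp f g ∈ S

/-- `S` is a maximal subsemigroup of `T`. -/
def IsMaximalSubsemigroupOf (S T : Set (ℕ → ℕ)) : Prop :=
  IsSubsemigroupOf S T ∧ S ≠ T ∧ ∀ U, IsSubsemigroupOf U T → S ⊆ U → U = S ∨ U = T



noncomputable def vOf (S : Finset ℕ) (j : ℕ) : ℕ :=
  if h : j < S.card then ((S.orderIsoOfFin rfl) ⟨S.card - 1 - j, by omega⟩ : ℕ) else 1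

lemma vOf_mem {S : Finset ℕ} {j : ℕ} (h : j < S.card) : vOf S j ∈ S := by
  rw [vOf, dif_pos h]; exact ((S.orderIsoOfFin rfl) _).2

lemma vOf_of_ge {S : Finset ℕ} {j : ℕ} (h : S.card ≤ j) : vOf S j = 1 := by
  rw [vOf, dif_neg (by omega)]

lemma vOf_lt_vOf {S : Finset ℕ} {i j : ℕ} (hij : i < j) (hj : j < S.card) :
    vOf S j < vOf S i := by
  have hi : i < S.card := by omega
  rw [vOf, dif_pos hj, vOf, dif_pos hi]
  have := (S.orderIsoOfFin rfl).strictMono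
    (a := ⟨S.card - 1 - j, by omega⟩) (b := ⟨S.card - 1 - i, by omega⟩) (by simp; omega)
  exact_mod_cast this

lemma vOf_strict {S : Finset ℕ} (hS : ∀ v ∈ S, 2 ≤ v) {i j : ℕ}
    (hij : i < j) (hj : j ≤ S.card) : vOf S j < vOf S i := by
  rcases lt_or_eq_of_le hj with h | h
  · exact vOf_lt_vOf hij h
  · subst h
    rw [vOf_of_ge le_rfl]
    exact lt_of_lt_of_le (by norm_num) (hS _ (vOf_mem (by omega)))

lemma vOf_anti {S : Finset ℕ} (hS : ∀ v ∈ S, 2 ≤ v) {i j : ℕ} (hij : i ≤ j) :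
    vOf S j ≤ vOf S i := by
  rcases eq_or_lt_of_le hij with h | h
  · subst h; exact le_rfl
  rcases le_or_gt j S.card with hj | hj
  · exact (vOf_strict hS h hj).le
  · rw [vOf_of_ge hj.le]
    rcases le_or_gt S.card i with hi | hi
    · rw [vOf_of_ge hi]
    · exact le_trans (by norm_num) (hS _ (vOf_mem hi))

lemma vOf_surj {S : Finset ℕ} {v : ℕ} (h : v ∈ S) : ∃ j, j < S.card ∧ vOf S j = v := by
  obtain ⟨k, hk⟩ := (S.orderIsoOfFin rfl).surjective ⟨v, h⟩
  refine ⟨S.card - 1 - k.1, by have := k.2; omega, ?_⟩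
  rw [vOf, dif_pos (by have := k.2; omega)]
  have : (⟨S.card - 1 - (S.card - 1 - k.1), by have := k.2; omega⟩ : Fin S.card) = k := by
    have := k.2; ext; simp; omega
  rw [this, hk]

lemma le_vOf_zero {S : Finset ℕ} {v : ℕ} (h : v ∈ S) : v ≤ vOf S 0 := by
  obtain ⟨j, hj, rfl⟩ := vOf_surj h
  rcases Nat.eq_zero_or_pos j with rfl | hp
  · exact le_rfl
  · exact (vOf_lt_vOf hp hj).le

lemma vOf_eq_min {S : Finset ℕ} {j : ℕ} (hj : j < S.card)
    (h : ∀ w ∈ S, vOf S j ≤ w) : j = S.card - 1 := by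
  by_contra hne
  have h1 : j < S.card - 1 := by omega
  have := vOf_lt_vOf (S := S) h1 (show S.card - 1 < S.card by omega)
  exact absurd (h _ (vOf_mem (show S.card - 1 < S.card by omega))) (by omega)

lemma vOf_succ_of_between {S : Finset ℕ} {j v w : ℕ} (hj : j < S.card)
    (hv : vOf S j = v) (hw : w ∈ S) (hwv : w < v)
    (hbetween : ∀ u ∈ S, ¬(w < u ∧ u < v)) : vOf S (j + 1) = w := by
  have hj1 : j + 1 < S.card := by
    rcases Nat.lt_or_ge (j+1) S.card with h | h
    · exact h
    · exfalso
      have hjm : j = S.card - 1 := by omega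
      have : ∀ u ∈ S, vOf S j ≤ u := by
        intro u hu
        obtain ⟨i, hi, rfl⟩ := vOf_surj hu
        rcases Nat.lt_trichotomy i j with h' | rfl | h'
        · exact (vOf_lt_vOf h' hj).le
        · exact le_rfl
        · omega
      exact absurd (this w hw) (by omega)
  have h1 : vOf S (j+1) < v := hv ▸ vOf_lt_vOf (Nat.lt_succ_self j) hj1
  have h2 : ¬ (w < vOf S (j+1)) := fun hc => hbetween _ (vOf_mem hj1) ⟨hc, h1⟩
  -- show also w ≤ vOf S (j+1)
  obtain ⟨i, hi, rfl⟩ := vOf_surj hw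
  have : j + 1 ≤ i := by
    by_contra hc
    push_neg at hc
    rcases Nat.lt_trichotomy i j with h' | rfl | h'
    · exact absurd (hv ▸ vOf_lt_vOf h' hj) (by omega)
    · omega
    · omega
  rcases eq_or_lt_of_le this with h' | h'
  · rw [h']
  · exact absurd (vOf_lt_vOf h' hi) (by omega)

def cnt (T : Finset ℕ) (x : ℕ) : ℕ := (T.filter (· ≤ x)).card

lemma cnt_mono {T : Finset ℕ} {x y : ℕ} (h : x ≤ y) : cnt T x ≤ cnt T y := by
  apply Finset.card_le_card
  intro t ht
  rw [Finset.mem_filter] at ht ⊢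
  exact ⟨ht.1, le_trans ht.2 h⟩

lemma cnt_succ (T : Finset ℕ) (x : ℕ) :
    cnt T (x + 1) = cnt T x + (if x + 1 ∈ T then 1 else 0) := by
  unfold cnt
  split_ifs with h
  · rw [show (T.filter (· ≤ x + 1)) = insert (x+1) (T.filter (· ≤ x)) from ?_,
      Finset.card_insert_of_notMem (by simp)]
    ext t
    simp only [Finset.mem_insert, Finset.mem_filter]
    constructor
    · rintro ⟨ht, hle⟩
      rcases Nat.lt_or_ge t (x+1) with h' | h'
      · exact Or.inr ⟨ht, by omega⟩
      · exact Or.inl (by omega)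
    · rintro (rfl | ⟨ht, hle⟩)
      · exact ⟨h, le_rfl⟩
      · exact ⟨ht, by omega⟩
  · rw [Nat.add_zero]
    congr 1
    ext t
    simp only [Finset.mem_filter]
    constructor
    · rintro ⟨ht, hle⟩
      refine ⟨ht, ?_⟩
      rcases Nat.lt_or_ge t (x+1) with h' | h'
      · omega
      · exact absurd (show t = x + 1 by omega) (fun hc => h (hc ▸ ht))
    · rintro ⟨ht, hle⟩; exact ⟨ht, by omega⟩

lemma cnt_of_lb {T : Finset ℕ} {m : ℕ} (hT : ∀ t ∈ T, m + 1 ≤ t) : cnt T m = 0 := by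
  unfold cnt
  rw [Finset.card_eq_zero, Finset.filter_eq_empty_iff]
  intro t ht
  have := hT t ht
  simp; omega

lemma cnt_filter_top {T : Finset ℕ} {n m : ℕ} (hT : T ⊆ Finset.Icc (m+1) (n+1)) :
    T.filter (· ≤ n) = T.erase (n + 1) := by
  ext t
  simp only [Finset.mem_filter, Finset.mem_erase]
  constructor
  · rintro ⟨ht, hle⟩; exact ⟨by omega, ht⟩
  · rintro ⟨hne, ht⟩
    have := Finset.mem_Icc.mp (hT ht)
    exact ⟨ht, by omega⟩

lemma cnt_le_card (T : Finset ℕ) (x : ℕ) : cnt T x ≤ T.card :=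
  Finset.card_le_card (Finset.filter_subset _ _)

/-- Discrete intermediate value theorem for step-≤1 functions. -/
lemma ivt (g : ℕ → ℕ) (hstep : ∀ x, g (x+1) ≤ g x + 1) (a : ℕ) :
    ∀ b, a ≤ b → ∀ j, g a ≤ j → j ≤ g b → ∃ x, a ≤ x ∧ x ≤ b ∧ g x = j := by
  intro b
  induction b with
  | zero =>
    intro hab j h1 h2
    obtain rfl : a = 0 := Nat.le_zero.mp hab
    exact ⟨0, le_rfl, le_rfl, by omega⟩
  | succ b ih =>
    intro hab j h1 h2
    rcases Nat.lt_or_ge j (g (b+1)) with h | h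
    · rcases Nat.lt_or_ge a (b+1) with h' | h'
      · have hgb : j ≤ g b := by have := hstep b; omega
        obtain ⟨x, hx1, hx2, hx3⟩ := ih (by omega) j h1 hgb
        exact ⟨x, hx1, by omega, hx3⟩
      · obtain rfl : a = b + 1 := by omega
        omega
    · exact ⟨b+1, hab, le_rfl, by omega⟩

noncomputable def mk (n m : ℕ) (S T : Finset ℕ) : ℕ → ℕ := fun x =>
  if ¬(1 ≤ x ∧ x ≤ n) then x else if x < m then 1 else vOf S (cnt T x)

lemma mk_out {n m : ℕ} {S T : Finset ℕ} {x : ℕ} (h : ¬(1 ≤ x ∧ x ≤ n)) :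
    mk n m S T x = x := by simp [mk, h]

lemma mk_lo {n m : ℕ} {S T : Finset ℕ} {x : ℕ} (h1 : 1 ≤ x) (h2 : x < m) (h3 : x ≤ n) :
    mk n m S T x = 1 := by simp [mk, h1, h2, h3]

lemma mk_hi {n m : ℕ} {S T : Finset ℕ} {x : ℕ} (h1 : m ≤ x) (h2 : x ≤ n) (hm : 1 ≤ m) :
    mk n m S T x = vOf S (cnt T x) := by
  have : 1 ≤ x := le_trans hm h1
  simp [mk, this, h2, Nat.not_lt.mpr h1]


section DirA

variable {n r m : ℕ} {S T : Finset ℕ}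
variable (hS : S ⊆ Finset.Icc 2 m) (hScard : S.card = r - 1)
variable (hT : T ⊆ Finset.Icc (m+1) (n+1)) (hTcard : T.card = r - 1)
variable (hr3 : 3 ≤ r) (hrm : r ≤ m) (hmn : m + 1 ≤ n)

include hS in
lemma hS2 : ∀ v ∈ S, 2 ≤ v := fun v hv => (Finset.mem_Icc.mp (hS hv)).1

include hS in
lemma hSm : ∀ v ∈ S, v ≤ m := fun v hv => (Finset.mem_Icc.mp (hS hv)).2

include hT in
lemma hT1 : ∀ t ∈ T, m + 1 ≤ t := fun t ht => (Finset.mem_Icc.mp (hT ht)).1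

include hS in
lemma vOf_pos (j : ℕ) : 1 ≤ vOf S j := by
  rcases Nat.lt_or_ge j S.card with h | h
  · exact le_trans (by norm_num) (hS2 hS _ (vOf_mem h))
  · rw [vOf_of_ge h]

include hS in
lemma vOf_le_m (j : ℕ) (hm1 : 1 ≤ m) : vOf S j ≤ m := by
  rcases Nat.lt_or_ge j S.card with h | h
  · exact hSm hS _ (vOf_mem h)
  · rw [vOf_of_ge h]; exact hm1

include hS hScard hr3 hrm hmn in
lemma mk_trans : IsTrans n (mk n m S T) := by
  constructor
  · intro x hx1 hx2
    rcases Nat.lt_or_ge x m with h | h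
    · rw [mk_lo hx1 h hx2]; omega
    · rw [mk_hi h hx2 (by omega)]
      exact ⟨vOf_pos hS _, le_trans (vOf_le_m hS _ (by omega)) (by omega)⟩
  · intro x hx; exact mk_out hx

include hS hrm hr3 in
lemma mk_dec : Decreasing n (mk n m S T) := by
  intro x hx1 hx2
  rcases Nat.lt_or_ge x m with h | h
  · rw [mk_lo hx1 h hx2]; exact hx1
  · rw [mk_hi h hx2 (by omega)]
    exact le_trans (vOf_le_m hS _ (by omega)) h

include hT in
lemma cnt_T_m : cnt T m = 0 := cnt_of_lb (hT1 hT)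

include hS hT in
lemma mk_anti_mono {a b : ℕ} (ha : m ≤ a) (hab : a ≤ b) (hb : b ≤ n) (hm1 : 1 ≤ m) :
    mk n m S T b ≤ mk n m S T a := by
  rw [mk_hi ha (by omega) hm1, mk_hi (by omega) hb hm1]
  exact vOf_anti (hS2 hS) (cnt_mono hab)

include hS hScard hT hr3 hrm hmn in
lemma mk_m_val : mk n m S T 1 = 1 ∧ mk n m S T m = vOf S 0 ∧ 2 ≤ vOf S 0 := by
  refine ⟨mk_lo le_rfl (by omega) (by omega), ?_, ?_⟩
  · rw [mk_hi le_rfl (by omega) (by omega), cnt_T_m hT]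
  · exact hS2 hS _ (vOf_mem (by omega))

include hS hScard hT hTcard hr3 hrm hmn in
lemma mk_anticyclic : AntiCyclic n (mk n m S T) := by
  have key : ∀ i, 1 ≤ i → i ≤ n →
      (mk n m S T i < nxt n (mk n m S T) i ↔ i = m - 1) := by
    intro i hi1 hi2
    constructor
    · intro hasc
      by_contra hne
      rcases Nat.lt_or_ge i n with hin | hin
      · rw [nxt, if_neg (by omega)] at hasc
        rcases Nat.lt_or_ge (i+1) m with h | h
        · rw [mk_lo hi1 (by omega) hi2, mk_lo (by omega) h (by omega)] at hasc
          omega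
        · have him : m ≤ i := by omega
          have hle := mk_anti_mono (a := i) (b := i + 1) hS hT him
            (Nat.le_succ i) (by omega) (by omega)
          omega
      · have hieq : i = n := by omega
        have hmn' : m ≤ n := by omega
        rw [hieq, nxt, if_pos rfl, (mk_m_val hS hScard hT hr3 hrm hmn).1,
          mk_hi hmn' le_rfl (by omega)] at hasc
        exact absurd (vOf_pos hS (cnt T n)) (by omega)
    · rintro rfl
      rw [nxt, if_neg (by omega), show m - 1 + 1 = m by omega]
      rw [mk_lo (by omega) (by omega) (by omega), (mk_m_val hS hScard hT hr3 hrm hmn).2.1]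
      have := (mk_m_val hS hScard hT hr3 hrm hmn).2.2
      omega
  have hfe : (Finset.Icc 1 n).filter
      (fun i => mk n m S T i < nxt n (mk n m S T) i) = {m - 1} := by
    ext i
    simp only [Finset.mem_filter, Finset.mem_singleton, Finset.mem_Icc]
    constructor
    · rintro ⟨⟨h1, h2⟩, hasc⟩
      exact (key i h1 h2).mp hasc
    · rintro rfl
      exact ⟨⟨by omega, by omega⟩, (key (m-1) (by omega) (by omega)).mpr rfl⟩
  rw [AntiCyclic, hfe, Finset.card_singleton]

include hS hScard hT hTcard hr3 hrm hmn in
lemma mk_descent : ∀ t ∈ T, nxt n (mk n m S T) (if t = n + 1 then n else t - 1)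
    < mk n m S T (if t = n + 1 then n else t - 1) := by
  intro t ht
  have ht' := Finset.mem_Icc.mp (hT ht)
  split_ifs with h
  · subst h
    rw [nxt, if_pos rfl, (mk_m_val hS hScard hT hr3 hrm hmn).1,
      mk_hi (by omega) le_rfl (by omega)]
    have hc : cnt T n < S.card := by
      have : cnt T n = (T.erase (n+1)).card := by rw [cnt, cnt_filter_top hT]
      rw [this, Finset.card_erase_of_mem ht]
      omega
    exact lt_of_lt_of_le (by norm_num) (hS2 hS _ (vOf_mem hc))
  · have htn : t ≤ n := by omega
    rw [nxt, if_neg (by omega), show t - 1 + 1 = t by omega,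
      mk_hi (by omega) htn (by omega), mk_hi (by omega) (by omega) (by omega)]
    have hc : cnt T t = cnt T (t-1) + 1 := by
      have := cnt_succ T (t-1)
      rw [show t - 1 + 1 = t by omega, if_pos ht] at this
      omega
    rw [hc]
    exact vOf_strict (hS2 hS) (Nat.lt_succ_self _)
      (by rw [← hc, hScard, ← hTcard]; exact cnt_le_card T t)

include hS hScard hT hTcard hr3 hrm hmn in
lemma mk_not_cyclic : ¬ Cyclic n (mk n m S T) := by
  rw [Cyclic, Nat.not_le]
  have h2 : 1 < T.card := by omega
  obtain ⟨t1, ht1, t2, ht2, hne⟩ := Finset.one_lt_card.mp h2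
  set d : ℕ → ℕ := fun t => if t = n + 1 then n else t - 1 with hd
  have hdmem : ∀ t ∈ T, d t ∈ (Finset.Icc 1 n).filter
      (fun i => nxt n (mk n m S T) i < mk n m S T i) := by
    intro t ht
    have ht' := Finset.mem_Icc.mp (hT ht)
    refine Finset.mem_filter.mpr ⟨Finset.mem_Icc.mpr ?_, ?_⟩
    · simp only [hd]; split_ifs <;> omega
    · exact mk_descent hS hScard hT hTcard hr3 hrm hmn t ht
  have hdinj : d t1 ≠ d t2 := by
    have h1 := Finset.mem_Icc.mp (hT ht1)
    have h2 := Finset.mem_Icc.mp (hT ht2)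
    simp only [hd]
    split_ifs <;> omega
  exact Finset.one_lt_card.mpr ⟨d t1, hdmem t1 ht1, d t2, hdmem t2 ht2, hdinj⟩

include hS hScard hT hTcard hr3 hrm hmn in
lemma mk_im : im n (mk n m S T) = insert 1 S := by
  ext v
  simp only [im, Finset.mem_image, Finset.mem_insert, Finset.mem_Icc]
  constructor
  · rintro ⟨x, ⟨hx1, hx2⟩, rfl⟩
    rcases Nat.lt_or_ge x m with h | h
    · left; exact mk_lo hx1 h hx2
    · rw [mk_hi h hx2 (by omega)]
      rcases Nat.lt_or_ge (cnt T x) S.card with h' | h'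
      · right; exact vOf_mem h'
      · left; exact vOf_of_ge h'
  · rintro (rfl | hv)
    · exact ⟨1, ⟨le_rfl, by omega⟩, mk_lo le_rfl (by omega) (by omega)⟩
    · obtain ⟨j, hj, rfl⟩ := vOf_surj hv
      have hub : j ≤ cnt T n := by
        have : cnt T n = (T.erase (n+1)).card := by rw [cnt, cnt_filter_top hT]
        by_cases h : n + 1 ∈ T
        · rw [this, Finset.card_erase_of_mem h]; omega
        · rw [this, Finset.erase_eq_of_notMem h]; omega
      obtain ⟨x, hx1, hx2, hx3⟩ := ivt (cnt T) (fun x => by rw [cnt_succ]; split_ifs <;> omega)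
        m n (by omega) j (by rw [cnt_T_m hT]; omega) hub
      exact ⟨x, ⟨by omega, hx2⟩, by rw [mk_hi hx1 hx2 (by omega), hx3]⟩

include hS hScard hT hTcard hr3 hrm hmn in
lemma mk_im_card : (im n (mk n m S T)).card = r := by
  rw [mk_im hS hScard hT hTcard hr3 hrm hmn,
    Finset.card_insert_of_notMem (fun h => by have := hS2 hS 1 h; omega), hScard]
  omega

include hS hScard hT hTcard hr3 hrm hmn in
lemma mk_ordDeg : ordDeg n (mk n m S T) = m := by
  rw [ordDeg]
  have hmem : m ∈ {x | 1 ≤ x ∧ x ≤ n ∧ mk n m S T x ≠ 1} := by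
    refine ⟨by omega, by omega, ?_⟩
    rw [(mk_m_val hS hScard hT hr3 hrm hmn).2.1]
    have := (mk_m_val hS hScard hT hr3 hrm hmn).2.2
    omega
  refine le_antisymm (Nat.sInf_le hmem) ?_
  have := Nat.sInf_mem (⟨m, hmem⟩ : Set.Nonempty _)
  obtain ⟨h1, h2, h3⟩ := this
  by_contra hc
  push_neg at hc
  exact h3 (mk_lo h1 (by omega) h2)

end DirA

section DirB

/-- The set of values of `f` other than 1. -/
def Sof (n : ℕ) (f : ℕ → ℕ) : Finset ℕ := (im n f).erase 1

/-- The set of (cyclically extended) descent positions of `f` in `[m+1, n+1]`. -/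
def Tof (n m : ℕ) (f : ℕ → ℕ) : Finset ℕ :=
  (Finset.Icc (m+1) (n+1)).filter (fun t => (if t ≤ n then f t else 1) < f (t-1))

lemma dirB {n r m : ℕ} {f : ℕ → ℕ} (hf : f ∈ RDstar n) (hcard : (im n f).card = r)
    (hdeg : ordDeg n f = m) (hr3 : 3 ≤ r) (hrm : r ≤ m) (hmn : m + 1 ≤ n) :
    Sof n f ⊆ Finset.Icc 2 m ∧ (Sof n f).card = r - 1 ∧
    Tof n m f ⊆ Finset.Icc (m+1) (n+1) ∧ (Tof n m f).card = r - 1 ∧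
    f = mk n m (Sof n f) (Tof n m f) := by
  obtain ⟨⟨htr, hdec⟩, hac, hnc⟩ := hf
  rw [ordDeg] at hdeg
  have hb1 : ∀ x, 1 ≤ x → x ≤ n → 1 ≤ f x := fun x h1 h2 => (htr.1 x h1 h2).1
  have hf1 : f 1 = 1 := le_antisymm (hdec 1 le_rfl (by omega)) (hb1 1 le_rfl (by omega))
  have hne : {x | 1 ≤ x ∧ x ≤ n ∧ f x ≠ 1}.Nonempty :=
    Nat.nonempty_of_pos_sInf (by omega)
  have hDm : 1 ≤ m ∧ m ≤ n ∧ f m ≠ 1 := by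
    have := Nat.sInf_mem hne
    rw [hdeg] at this
    exact this
  have hfm2 : 2 ≤ f m := by have := hb1 m (by omega) (by omega); omega
  have hlo : ∀ x, 1 ≤ x → x < m → f x = 1 := by
    intro x h1 h2
    by_contra hc
    have := Nat.sInf_le (show x ∈ {x | 1 ≤ x ∧ x ≤ n ∧ f x ≠ 1} from ⟨h1, by omega, hc⟩)
    omega
  -- at most one ascent, and m-1 is an ascent, so no ascent in [m, n-1]
  have hstep : ∀ i, m ≤ i → i + 1 ≤ n → f (i + 1) ≤ f i := by
    intro i hi1 hi2
    by_contra hc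
    push_neg at hc
    have hm1 : (m - 1) ∈ (Finset.Icc 1 n).filter (fun i => f i < nxt n f i) := by
      refine Finset.mem_filter.mpr ⟨Finset.mem_Icc.mpr ⟨by omega, by omega⟩, ?_⟩
      rw [nxt, if_neg (by omega), show m - 1 + 1 = m by omega,
        hlo (m-1) (by omega) (by omega)]
      omega
    have hi : i ∈ (Finset.Icc 1 n).filter (fun i => f i < nxt n f i) := by
      refine Finset.mem_filter.mpr ⟨Finset.mem_Icc.mpr ⟨by omega, by omega⟩, ?_⟩
      rw [nxt, if_neg (by omega)]
      exact hc
    have := Finset.one_lt_card.mpr ⟨m - 1, hm1, i, hi, by omega⟩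
    rw [AntiCyclic] at hac
    omega
  have hmono : ∀ a b, m ≤ a → a ≤ b → b ≤ n → f b ≤ f a := by
    intro a b ha hab hb
    induction b, hab using Nat.le_induction with
    | base => exact le_rfl
    | succ b hab' ih =>
      exact le_trans (hstep b (by omega) (by omega)) (ih (by omega))
  -- membership in S
  have hSmem : ∀ w, w ∈ Sof n f ↔ (w ≠ 1 ∧ ∃ y, m ≤ y ∧ y ≤ n ∧ f y = w) := by
    intro w
    rw [Sof, Finset.mem_erase]
    constructor
    · rintro ⟨hw1, hw2⟩
      refine ⟨hw1, ?_⟩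
      rw [im, Finset.mem_image] at hw2
      obtain ⟨y, hy, rfl⟩ := hw2
      rw [Finset.mem_Icc] at hy
      refine ⟨y, ?_, hy.2, rfl⟩
      by_contra hc
      exact hw1 (hlo y hy.1 (by omega))
    · rintro ⟨hw1, y, hy1, hy2, rfl⟩
      refine ⟨hw1, ?_⟩
      rw [im, Finset.mem_image]
      exact ⟨y, Finset.mem_Icc.mpr ⟨by omega, hy2⟩, rfl⟩
  have hS : Sof n f ⊆ Finset.Icc 2 m := by
    intro w hw
    obtain ⟨hw1, y, hy1, hy2, rfl⟩ := (hSmem w).mp hw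
    have h2 := hb1 y (by omega) hy2
    have h3 := hmono m y (le_refl m) hy1 hy2
    have h4 := hdec m (by omega) (by omega)
    rw [Finset.mem_Icc]
    omega
  have hScard : (Sof n f).card = r - 1 := by
    rw [Sof, Finset.card_erase_of_mem, hcard]
    rw [im, Finset.mem_image]
    exact ⟨1, Finset.mem_Icc.mpr ⟨le_rfl, by omega⟩, hf1⟩
  have hT : Tof n m f ⊆ Finset.Icc (m+1) (n+1) := Finset.filter_subset _ _
  have hfmS : f m ∈ Sof n f := (hSmem _).mpr ⟨by omega, m, le_rfl, by omega, rfl⟩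
  have hSpos : 0 < (Sof n f).card := Finset.card_pos.mpr ⟨f m, hfmS⟩
  -- the key reconstruction identity
  have hTmem : ∀ t, t ∈ Tof n m f ↔
      (m + 1 ≤ t ∧ t ≤ n + 1 ∧ (if t ≤ n then f t else 1) < f (t-1)) := by
    intro t
    rw [Tof, Finset.mem_filter, Finset.mem_Icc]
    tauto
  have key : ∀ x, m ≤ x → x ≤ n → f x = vOf (Sof n f) (cnt (Tof n m f) x) := by
    intro x hx1 hx2
    induction x, hx1 using Nat.le_induction with
    | base =>
      have h0 : cnt (Tof n m f) m = 0 :=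
        cnt_of_lb (fun t ht => ((hTmem t).mp ht).1)
      rw [h0]
      refine le_antisymm (le_vOf_zero hfmS) ?_
      have := vOf_mem hSpos
      obtain ⟨hw1, y, hy1, hy2, hy3⟩ := (hSmem _).mp this
      rw [← hy3]
      exact hmono m y le_rfl hy1 hy2
    | succ x hx1' ih =>
      have ihx := ih (by omega)
      by_cases ht : (x + 1) ∈ Tof n m f
      · have hdesc : f (x + 1) < f x := by
          have := ((hTmem (x+1)).mp ht).2.2
          rw [if_pos (by omega : x + 1 ≤ n)] at this
          simpa using this
        have hcnt : cnt (Tof n m f) (x+1) = cnt (Tof n m f) x + 1 := by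
          rw [cnt_succ, if_pos ht]
        have hfx2 : 2 ≤ f x := by
          have := hb1 (x+1) (by omega) (by omega)
          omega
        have hcx : cnt (Tof n m f) x < (Sof n f).card := by
          by_contra hc
          push_neg at hc
          rw [vOf_of_ge hc] at ihx
          omega
        have hnob : ∀ u ∈ Sof n f, ¬(f (x+1) < u ∧ u < f x) := by
          rintro u hu ⟨h1, h2⟩
          obtain ⟨hu1, y, hy1, hy2, rfl⟩ := (hSmem u).mp hu
          rcases le_or_gt y x with h | h
          · exact absurd (hmono y x hy1 h (by omega)) (by omega)
          · exact absurd (hmono (x+1) y (by omega) h hy2) (by omega)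
        rcases Nat.lt_or_ge (f (x+1)) 2 with hfx1 | hfx1
        · -- f (x+1) = 1
          have hfx1' : f (x+1) = 1 := by
            have := hb1 (x+1) (by omega) (by omega); omega
          have hminS : ∀ w ∈ Sof n f, vOf (Sof n f) (cnt (Tof n m f) x) ≤ w := by
            intro w hw
            obtain ⟨hw1, y, hy1, hy2, rfl⟩ := (hSmem w).mp hw
            rw [← ihx]
            rcases le_or_gt y x with h | h
            · exact hmono y x hy1 h (by omega)
            · have := hmono (x+1) y (by omega) h hy2
              have := hb1 y (by omega) hy2
              omega
          have := vOf_eq_min hcx hminS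
          rw [hcnt, hfx1', vOf_of_ge (by omega)]
        · have hfS : f (x+1) ∈ Sof n f :=
            (hSmem _).mpr ⟨by omega, x+1, by omega, by omega, rfl⟩
          rw [hcnt]
          exact (vOf_succ_of_between hcx ihx.symm hfS hdesc hnob).symm
      · have heq : f (x + 1) = f x := by
          have h1 := hstep x (by omega) (by omega)
          have h2 : ¬ ((if x + 1 ≤ n then f (x+1) else 1) < f x) := by
            intro hc
            exact ht ((hTmem (x+1)).mpr ⟨by omega, by omega, by simpa using hc⟩)
          rw [if_pos (by omega : x + 1 ≤ n)] at h2
          omega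
        have hcnt : cnt (Tof n m f) (x+1) = cnt (Tof n m f) x := by
          rw [cnt_succ, if_neg ht]; omega
        rw [heq, hcnt, ihx]
  -- cardinality of T
  have hTinj : ∀ t1 ∈ Tof n m f, ∀ t2 ∈ Tof n m f, t1 ≠ t2 → f (t1 - 1) ≠ f (t2 - 1) := by
    have main : ∀ t1 ∈ Tof n m f, ∀ t2 ∈ Tof n m f, t1 < t2 → f (t2 - 1) < f (t1 - 1) := by
      intro t1 ht1 t2 ht2 hlt
      obtain ⟨ha1, ha2, ha3⟩ := (hTmem t1).mp ht1
      obtain ⟨hb1', hb2, hb3⟩ := (hTmem t2).mp ht2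
      rw [if_pos (by omega : t1 ≤ n)] at ha3
      calc f (t2 - 1) ≤ f t1 := hmono t1 (t2-1) (by omega) (by omega) (by omega)
        _ < f (t1 - 1) := ha3
    intro t1 ht1 t2 ht2 hne'
    rcases Nat.lt_or_ge t1 t2 with h | h
    · exact (main t1 ht1 t2 ht2 h).ne'
    · exact (main t2 ht2 t1 ht1 (by omega)).ne
  have hTle : (Tof n m f).card ≤ (Sof n f).card := by
    apply Finset.card_le_card_of_injOn (fun t => f (t - 1))
    · intro t ht
      obtain ⟨ha1, ha2, ha3⟩ := (hTmem t).mp ht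
      have hfpos : 1 ≤ (if t ≤ n then f t else 1) := by
        split_ifs with h
        · exact hb1 t (by omega) h
        · exact le_rfl
      exact (hSmem (f (t - 1))).mpr ⟨by omega, t - 1, by omega, by omega, rfl⟩
    · intro t1 ht1 t2 ht2 heq
      by_contra hc
      exact hTinj t1 ht1 t2 ht2 hc heq
  have hcntn : cnt (Tof n m f) n = ((Tof n m f).erase (n+1)).card := by
    rw [cnt, cnt_filter_top hT]
  have hTcard : (Tof n m f).card = r - 1 := by
    rcases Nat.lt_or_ge (f n) 2 with hfn | hfn
    · -- f n = 1 : n+1 ∉ T and cnt T n = S.card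
      have hfn1 : f n = 1 := by have := hb1 n (by omega) (by omega); omega
      have hnT : (n+1) ∉ Tof n m f := by
        intro hc
        have := ((hTmem (n+1)).mp hc).2.2
        rw [if_neg (by omega), show n + 1 - 1 = n by omega, hfn1] at this
        omega
      have h1 : cnt (Tof n m f) n = (Tof n m f).card := by
        rw [hcntn, Finset.erase_eq_of_notMem hnT]
      have h2 : (Sof n f).card ≤ cnt (Tof n m f) n := by
        by_contra hc
        push_neg at hc
        have := vOf_mem hc
        rw [← key n (by omega) (by omega), hfn1] at this
        have := hS this
        rw [Finset.mem_Icc] at this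
        omega
      omega
    · -- f n ≥ 2 : n+1 ∈ T and cnt T n = S.card - 1
      have hnT : (n+1) ∈ Tof n m f :=
        (hTmem (n+1)).mpr ⟨by omega, le_rfl,
          by rw [if_neg (by omega), show n + 1 - 1 = n by omega]; omega⟩
      have hcx : cnt (Tof n m f) n < (Sof n f).card := by
        by_contra hc
        push_neg at hc
        have := key n (by omega) (by omega)
        rw [vOf_of_ge hc] at this
        omega
      have hminS : ∀ w ∈ Sof n f, vOf (Sof n f) (cnt (Tof n m f) n) ≤ w := by
        intro w hw
        obtain ⟨hw1, y, hy1, hy2, rfl⟩ := (hSmem w).mp hw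
        rw [← key n (by omega) (by omega)]
        exact hmono y n hy1 hy2 le_rfl
      have h1 := vOf_eq_min hcx hminS
      have h2 : cnt (Tof n m f) n = (Tof n m f).card - 1 := by
        rw [hcntn, Finset.card_erase_of_mem hnT]
      have h3 : 1 ≤ (Tof n m f).card := Finset.card_pos.mpr ⟨n+1, hnT⟩
      omega
  refine ⟨hS, hScard, hT, hTcard, ?_⟩
  funext x
  by_cases hx : 1 ≤ x ∧ x ≤ n
  · rcases Nat.lt_or_ge x m with h | h
    · rw [mk_lo hx.1 h hx.2, hlo x hx.1 h]
    · rw [mk_hi h hx.2 (by omega), key x h hx.2]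
  · rw [mk_out hx, htr.2 x hx]

end DirB

section Final

variable {n r m : ℕ} {S T : Finset ℕ}
variable (hS : S ⊆ Finset.Icc 2 m) (hScard : S.card = r - 1)
variable (hT : T ⊆ Finset.Icc (m+1) (n+1)) (hTcard : T.card = r - 1)
variable (hr3 : 3 ≤ r) (hrm : r ≤ m) (hmn : m + 1 ≤ n)

include hS hScard hT hTcard hr3 hrm hmn in
lemma mk_T_recover : Tof n m (mk n m S T) = T := by
  ext t
  rw [Tof, Finset.mem_filter, Finset.mem_Icc]
  constructor
  · rintro ⟨⟨h1, h2⟩, hcond⟩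
    by_contra ht
    rcases Nat.lt_or_ge n t with h | h
    · -- t = n + 1
      obtain rfl : t = n + 1 := by omega
      rw [if_neg (by omega), show n + 1 - 1 = n by omega,
        mk_hi (by omega) le_rfl (by omega)] at hcond
      have hc : cnt T n = S.card := by
        have : cnt T n = (T.erase (n+1)).card := by rw [cnt, cnt_filter_top hT]
        rw [this, Finset.erase_eq_of_notMem ht, hTcard, hScard]
      rw [hc, vOf_of_ge le_rfl] at hcond
      omega
    · rw [if_pos h, mk_hi (by omega) h (by omega),
        mk_hi (by omega) (by omega) (by omega)] at hcond
      have hc : cnt T t = cnt T (t-1) := by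
        have := cnt_succ T (t-1)
        rw [show t - 1 + 1 = t by omega, if_neg ht] at this
        omega
      rw [hc] at hcond
      omega
  · intro ht
    have ht' := Finset.mem_Icc.mp (hT ht)
    have hd := mk_descent hS hScard hT hTcard hr3 hrm hmn t ht
    refine ⟨⟨ht'.1, ht'.2⟩, ?_⟩
    by_cases h : t = n + 1
    · subst h
      rw [if_pos rfl, nxt, if_pos rfl] at hd
      rw [if_neg (by omega), show n + 1 - 1 = n by omega]
      rw [(mk_m_val hS hScard hT hr3 hrm hmn).1] at hd
      exact hd
    · rw [if_neg h, nxt, if_neg (by omega)] at hd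
      rw [show t - 1 + 1 = t by omega] at hd
      rw [if_pos (by omega)]
      exact hd

include hS hScard hT hTcard hr3 hrm hmn in
lemma mk_S_recover : Sof n (mk n m S T) = S := by
  rw [Sof, mk_im hS hScard hT hTcard hr3 hrm hmn,
    Finset.erase_insert (fun h => by have := hS2 hS 1 h; omega)]

end Final

theorem card_rdstar_fixed_degree (n r m : ℕ) (hr3 : 3 ≤ r) (hr : r ≤ (n + 2) / 2)
    (hrm : r ≤ m) (hm : m ≤ n - r + 2) :
    {f | f ∈ RDstar n ∧ (im n f).card = r ∧ ordDeg n f = m}.ncard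
      = Nat.choose (m - 1) (r - 1) * Nat.choose (n - m + 1) (r - 1) := by
  have h2r : r * 2 ≤ n + 2 := (Nat.le_div_iff_mul_le (by norm_num)).mp hr
  have hmn : m + 1 ≤ n := by omega
  set X := (Finset.Icc 2 m).powersetCard (r-1) with hX
  set Y := (Finset.Icc (m+1) (n+1)).powersetCard (r-1) with hY
  have hmem : ∀ p : Finset ℕ × Finset ℕ, p ∈ (↑(X ×ˢ Y) : Set (Finset ℕ × Finset ℕ)) ↔
      (p.1 ⊆ Finset.Icc 2 m ∧ p.1.card = r - 1) ∧
      (p.2 ⊆ Finset.Icc (m+1) (n+1) ∧ p.2.card = r - 1) := by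
    intro p
    rw [Finset.mem_coe, Finset.mem_product, hX, hY,
      Finset.mem_powersetCard, Finset.mem_powersetCard]
  have hEq : {f | f ∈ RDstar n ∧ (im n f).card = r ∧ ordDeg n f = m}
      = (fun p : Finset ℕ × Finset ℕ => mk n m p.1 p.2) '' ↑(X ×ˢ Y) := by
    ext f
    constructor
    · rintro ⟨hf, hcard, hdeg⟩
      obtain ⟨hS, hScard, hT, hTcard, hfeq⟩ := dirB hf hcard hdeg hr3 hrm hmn
      exact ⟨(Sof n f, Tof n m f), (hmem _).mpr ⟨⟨hS, hScard⟩, ⟨hT, hTcard⟩⟩, hfeq.symm⟩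
    · rintro ⟨⟨S, T⟩, hp, rfl⟩
      obtain ⟨⟨hS, hScard⟩, ⟨hT, hTcard⟩⟩ := (hmem _).mp hp
      exact ⟨⟨⟨mk_trans hS hScard hr3 hrm hmn, mk_dec hS hr3 hrm⟩,
        mk_anticyclic hS hScard hT hTcard hr3 hrm hmn,
        mk_not_cyclic hS hScard hT hTcard hr3 hrm hmn⟩,
        mk_im_card hS hScard hT hTcard hr3 hrm hmn,
        mk_ordDeg hS hScard hT hTcard hr3 hrm hmn⟩
  have hinj : Set.InjOn (fun p : Finset ℕ × Finset ℕ => mk n m p.1 p.2)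
      ↑(X ×ˢ Y) := by
    rintro ⟨S1, T1⟩ hp ⟨S2, T2⟩ hq heq
    obtain ⟨⟨hS1, hS1c⟩, ⟨hT1, hT1c⟩⟩ := (hmem _).mp hp
    obtain ⟨⟨hS2, hS2c⟩, ⟨hT2, hT2c⟩⟩ := (hmem _).mp hq
    simp only at heq
    have hS1' : S1 ⊆ Finset.Icc 2 m := hS1
    have hS1c' : S1.card = r - 1 := hS1c
    have hT1' : T1 ⊆ Finset.Icc (m+1) (n+1) := hT1
    have hT1c' : T1.card = r - 1 := hT1c
    have hS2' : S2 ⊆ Finset.Icc 2 m := hS2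
    have hS2c' : S2.card = r - 1 := hS2c
    have hT2' : T2 ⊆ Finset.Icc (m+1) (n+1) := hT2
    have hT2c' : T2.card = r - 1 := hT2c
    have hSeq : S1 = S2 := by
      rw [← mk_S_recover hS1' hS1c' hT1' hT1c' hr3 hrm hmn,
        ← mk_S_recover hS2' hS2c' hT2' hT2c' hr3 hrm hmn, heq]
    have hTeq : T1 = T2 := by
      rw [← mk_T_recover hS1' hS1c' hT1' hT1c' hr3 hrm hmn,
        ← mk_T_recover hS2' hS2c' hT2' hT2c' hr3 hrm hmn, heq]
    rw [Prod.mk.injEq]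
    exact ⟨hSeq, hTeq⟩
  rw [hEq, Set.ncard_image_of_injOn hinj, Set.ncard_coe_finset,
    Finset.card_product, hX, hY, Finset.card_powersetCard, Finset.card_powersetCard,
    Nat.card_Icc, Nat.card_Icc, show m + 1 - 2 = m - 1 by omega,
    show n + 1 + 1 - (m + 1) = n - m + 1 by omega]

end ORDPaper
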